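/- Let A be a reduced ring with minimal primes p_1,...,p_s, a_I = ∩_{i∈I} p_i for I ⊆ {1,...,s}, and A_I = A/a_I. Then the natural surjection A_I ⊗_A Ω_A^p → Ω_{A_I}^p of universally finite differential modules has torsion kernel (as A_I-module). -/

import Mathlib

open scoped TensorProduct

lemma aux_min_prime_ann {R : Type*} [CommRing R] [IsReduced R]
    {P : Ideal R} (hP : P ∈ minimalPrimes R) {a : R} (ha : a ∈ P) :
    ∃ s ∉ P, s * a = 0 := by
  haveI hPp : P.IsPrime := hP.1.1
  have hnil : IsNilpotent (algebraMap R (Localization P.primeCompl) a) := by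
    have hrad := IsLocalization.AtPrime.radical_map_of_mem_minimalPrimes
      (Localization P.primeCompl) P ⊥ hP
    have hmem : algebraMap R (Localization P.primeCompl) a ∈
        P.map (algebraMap R (Localization P.primeCompl)) := Ideal.mem_map_of_mem _ ha
    rw [← hrad, Ideal.map_bot] at hmem
    obtain ⟨n, hn⟩ := hmem
    exact ⟨n, by simpa using hn⟩
  obtain ⟨n, hn⟩ := hnil
  rw [← map_pow, IsLocalization.map_eq_zero_iff P.primeCompl] at hn
  obtain ⟨m, hm⟩ := hn
  refine ⟨m, m.2, ?_⟩
  have h2 : ((m : R) * a) ^ (n + 1) = 0 := by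
    have : ((m : R) * a) ^ (n + 1) = ((m : R) ^ n * a) * ((m : R) * a ^ n) := by ring
    rw [this, hm, mul_zero]
  exact IsReduced.eq_zero _ ⟨n + 1, h2⟩

lemma aux_exists_c {A : Type*} [CommRing A] [IsReduced A] [IsNoetherianRing A]
    (S : Set (Ideal A)) (hS : S ⊆ minimalPrimes A) (aI : Ideal A) (haI : aI = sInf S) :
    ∃ c : A, (Ideal.Quotient.mk aI c) ∈ nonZeroDivisors (A ⧸ aI) ∧ ∀ a ∈ aI, c * a = 0 := by
  classical
  set B := A ⧸ aI with hB
  set π := Ideal.Quotient.mk aI with hπ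
  have hrad : aI.IsRadical := by
    subst haI
    intro x hx
    obtain ⟨n, hn⟩ := hx
    rw [Ideal.mem_sInf] at hn ⊢
    intro p hp
    haveI : p.IsPrime := (hS hp).1.1
    exact this.mem_of_pow_mem n (hn hp)
  haveI hBred : IsReduced B := (Ideal.isRadical_iff_quotient_reduced aI).mp hrad
  rcases subsingleton_or_nontrivial B with hsub | hnt
  · exact ⟨0, mem_nonZeroDivisors_iff_right.mpr fun b _ => Subsingleton.elim _ _, fun a _ => by rw [zero_mul]⟩
  set J : Ideal A := Submodule.annihilator aI with hJ
  have hJq : ∀ q ∈ minimalPrimes B, ¬ (Ideal.map π J ≤ q) := by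
    intro q hq hle
    haveI hqp : q.IsPrime := hq.1.1
    set P := Ideal.comap π q with hP
    have hPmem : P ∈ aI.minimalPrimes := by
      rw [Ideal.minimalPrimes_eq_comap]
      exact ⟨q, hq, rfl⟩
    haveI hPp : P.IsPrime := hPmem.1.1
    have hPmin : P ∈ minimalPrimes A := by
      have hSfin : S.Finite := (minimalPrimes.finite_of_isNoetherianRing A).subset hS
      have hsInfle : sInf S ≤ P := haI ▸ hPmem.1.2
      have hinf : hSfin.toFinset.inf id ≤ P := by
        rwa [Finset.inf_id_eq_sInf, hSfin.coe_toFinset]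
      obtain ⟨p, hpS, hpP⟩ := (Ideal.IsPrime.inf_le' hPp).mp hinf
      rw [hSfin.mem_toFinset] at hpS
      have hPeqp : P = p := by
        have hple : aI ≤ p := haI ▸ sInf_le hpS
        exact le_antisymm (hPmem.2 ⟨(hS hpS).1.1, hple⟩ hpP) hpP
      rw [hPeqp]; exact hS hpS
    obtain ⟨T, hT⟩ : aI.FG := (isNoetherianRing_iff_ideal_fg A).mp ‹_› aI
    have hch : ∀ g : {y // y ∈ T}, ∃ s, s ∉ P ∧ s * (g : A) = 0 := by
      rintro ⟨g, hg⟩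
      have hgP : g ∈ P := hPmem.1.2 (hT ▸ Ideal.subset_span hg)
      exact aux_min_prime_ann hPmin hgP
    choose f hf1 hf2 using hch
    set c := ∏ g ∈ T.attach, f g with hc
    have hcg : ∀ g : {y // y ∈ T}, c * (g : A) = 0 := by
      intro g
      rw [hc, ← Finset.mul_prod_erase T.attach f (Finset.mem_attach T g),
        mul_comm (f g) _, mul_assoc, hf2 g, mul_zero]
    have hcJ : c ∈ J := by
      rw [hJ, Submodule.mem_annihilator]
      intro a ha
      rw [smul_eq_mul]
      have haT : a ∈ Ideal.span (T : Set A) := hT.symm ▸ ha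
      have hKle : Ideal.span (T : Set A) ≤ LinearMap.ker (LinearMap.lsmul A A c) := by
        rw [Ideal.span_le]
        intro g hg
        simpa [LinearMap.mem_ker, smul_eq_mul] using hcg ⟨g, hg⟩
      simpa [LinearMap.mem_ker, smul_eq_mul] using hKle haT
    have hcP : c ∉ P := by
      intro hcP
      obtain ⟨g, _, hgP⟩ := Ideal.IsPrime.prod_mem_iff.mp (hc ▸ hcP)
      exact hf1 g hgP
    exact hcP (Ideal.mem_comap.mp (hle (Ideal.mem_map_of_mem π hcJ)))
  have hBfin : (minimalPrimes B).Finite := minimalPrimes.finite_of_isNoetherianRing B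
  have hnotsub :
      ¬ ((Ideal.map π J : Set B) ⊆ ⋃ q ∈ (hBfin.toFinset : Set (Ideal B)), (q : Set B)) := by
    intro hsub
    obtain ⟨q, hq, hle⟩ := (Ideal.subset_union_prime (⊥ : Ideal B) (⊥ : Ideal B)
      (fun q hq _ _ => (hBfin.mem_toFinset.mp hq).1.1)).mp hsub
    exact hJq q (hBfin.mem_toFinset.mp hq) hle
  obtain ⟨cb, hcbJ, hcbq⟩ := Set.not_subset.mp hnotsub
  obtain ⟨c, hcJ, rfl⟩ := Ideal.mem_map_iff_of_surjective π Ideal.Quotient.mk_surjective |>.mp hcbJ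
  refine ⟨c, ?_, ?_⟩
  · rw [mem_nonZeroDivisors_iff_right]
    intro b hb
    by_contra hbne
    have hbnil : b ∉ nilradical B := fun h => hbne (IsReduced.eq_zero _ (mem_nilradical.mp h))
    rw [nilradical_eq_sInf, Ideal.mem_sInf] at hbnil
    push_neg at hbnil
    obtain ⟨q₀, hq₀p, hbq₀⟩ := hbnil
    haveI : q₀.IsPrime := hq₀p
    obtain ⟨q, hqmin, hqle⟩ := Ideal.exists_minimalPrimes_le (bot_le (a := q₀))
    haveI hqp : q.IsPrime := hqmin.1.1
    have hbc : b * π c ∈ q := hb ▸ q.zero_mem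
    rcases hqp.mem_or_mem hbc with h | h
    · exact hbq₀ (hqle h)
    · refine hcbq ?_
      rw [Set.mem_iUnion₂]
      exact ⟨q, hBfin.mem_toFinset.mpr hqmin, h⟩
  · intro a ha
    have := Submodule.mem_annihilator.mp hcJ a ha
    rwa [smul_eq_mul] at this

set_option maxHeartbeats 2000000 in
set_option synthInstance.maxHeartbeats 1000000 in
/-- **Lemma 52** (Schulze).  Let `A` be a reduced (equidimensional analytic) `k`-algebra
(char `k = 0`) with minimal primes `p₁, …, p_s`, let `a_I = ⋂_{i ∈ I} p_i` be an
intersection of minimal primes and `A_I = A ⧸ a_I`.  Then for every `p` the natural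
surjection `A_I ⊗_A Ω_A^p → Ω_{A_I}^p` (on `p`-th exterior powers of Kähler
differentials) has torsion kernel as an `A_I`-module. -/
theorem quotient_by_minimal_primes_kaehler_baseChange_torsion_kernel
    (k A : Type*) [Field k] [CharZero k]
    [CommRing A] [Algebra k A] [IsReduced A] [IsNoetherianRing A]
    (S : Set (Ideal A)) (hS : S ⊆ minimalPrimes A) (aI : Ideal A) (haI : aI = sInf S) :
    letI B := A ⧸ aI
    letI : Algebra A (ExteriorAlgebra B (Ω[B⁄k])) :=
      RingHom.toAlgebra'
        ((algebraMap B (ExteriorAlgebra B (Ω[B⁄k]))).comp (algebraMap A B))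
        (fun a x => Algebra.commutes (R := B) ((algebraMap A B) a) x)
    haveI : @IsScalarTower A B (ExteriorAlgebra B (Ω[B⁄k])) _ _ Algebra.toSMul :=
      IsScalarTower.of_algebraMap_eq fun _ => rfl
    -- the natural `A`-algebra map `Λ_A Ω_A → Λ_{A_I} Ω_{A_I}`
    letI g : ExteriorAlgebra A (Ω[A⁄k]) →ₐ[A] ExteriorAlgebra B (Ω[B⁄k]) :=
      ExteriorAlgebra.lift A
        ⟨((ExteriorAlgebra.ι B).restrictScalars A) ∘ₗ KaehlerDifferential.map k k A B,
         fun m => ExteriorAlgebra.ι_sq_zero _⟩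
    -- its base change `A_I ⊗_A Λ_A Ω_A → Λ_{A_I} Ω_{A_I}`
    letI Φ : B ⊗[A] ExteriorAlgebra A (Ω[A⁄k]) →ₗ[B] ExteriorAlgebra B (Ω[B⁄k]) :=
      LinearMap.liftBaseChange B g.toLinearMap
    ∀ p : ℕ, ∀ x ∈ Submodule.baseChange B (⋀[A]^p (Ω[A⁄k])),
      Φ x = 0 → ∃ a ∈ nonZeroDivisors B, a • x = 0 := by
  intro p x hx
  obtain ⟨c, hcnzd, hcann⟩ := aux_exists_c S hS aI haI
  set B := A ⧸ aI with hBdef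
  set cb : B := Ideal.Quotient.mk aI c with hcb
  have hsurj : Function.Surjective (algebraMap A B) := by
    rw [Ideal.Quotient.algebraMap_eq]; exact Ideal.Quotient.mk_surjective
  -- Step 1: cb kills 1 ⊗ D a for a ∈ aI
  have key : ∀ a ∈ aI, cb • ((1 : B) ⊗ₜ[A] (KaehlerDifferential.D k A a))
      = (0 : B ⊗[A] Ω[A⁄k]) := by
    intro a ha
    have h0 : (KaehlerDifferential.D k A) (c * a) = 0 := by rw [hcann a ha, map_zero]
    rw [Derivation.leibniz] at h0
    have hca : c • (KaehlerDifferential.D k A a) = -(a • (KaehlerDifferential.D k A c)) :=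
      eq_neg_of_add_eq_zero_left h0
    rw [hcb, ← Ideal.Quotient.algebraMap_eq, algebraMap_smul, ← TensorProduct.tmul_smul, hca,
      TensorProduct.tmul_neg, neg_eq_zero, TensorProduct.tmul_smul,
      ← algebraMap_smul B a, Ideal.Quotient.algebraMap_eq, Ideal.Quotient.eq_zero_iff_mem.mpr ha,
      zero_smul]
  -- Step 2: cb kills the kernel of mapBaseChange
  have hkerc : ∀ y : B ⊗[A] Ω[A⁄k], KaehlerDifferential.mapBaseChange k A B y = 0 →
      cb • y = 0 := by
    intro y hy
    have hmem : y ∈ LinearMap.range (KaehlerDifferential.kerCotangentToTensor k A B) := by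
      rw [KaehlerDifferential.range_kerCotangentToTensor k A B hsurj]
      exact hy
    obtain ⟨z, rfl⟩ := hmem
    obtain ⟨w, rfl⟩ := Ideal.toCotangent_surjective _ z
    rw [KaehlerDifferential.kerCotangentToTensor_toCotangent]
    refine key w.1 ?_
    obtain ⟨a, haker⟩ := w
    have hw : algebraMap A B a = 0 := RingHom.mem_ker.mp haker
    rw [Ideal.Quotient.algebraMap_eq] at hw
    exact Ideal.Quotient.eq_zero_iff_mem.mp hw
  -- Step 3: construct σ and Ψ
  set β := KaehlerDifferential.mapBaseChange k A B with hβdef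
  have hβs : Function.Surjective β := KaehlerDifferential.mapBaseChange_surjective k A B hsurj
  set t := Function.surjInv hβs with htdef
  have hβt : ∀ ω, β (t ω) = ω := Function.surjInv_eq hβs
  set j : B ⊗[A] Ω[A⁄k] →ₗ[B] B ⊗[A] ExteriorAlgebra A (Ω[A⁄k]) :=
    LinearMap.baseChange B (ExteriorAlgebra.ι A : Ω[A⁄k] →ₗ[A] ExteriorAlgebra A (Ω[A⁄k]))
    with hjdef
  have hfac : ∀ u w, β u = β w → cb • j u = cb • j w := by
    intro u w h
    have h0 : β (u - w) = 0 := by rw [map_sub, h, sub_self]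
    have h1 := hkerc (u - w) h0
    have h2 : j (cb • (u - w)) = 0 := by rw [h1, map_zero]
    rw [map_smul, map_sub, smul_sub] at h2
    exact sub_eq_zero.mp h2
  set σ : Ω[B⁄k] →ₗ[B] B ⊗[A] ExteriorAlgebra A (Ω[A⁄k]) :=
    { toFun := fun ω => cb • j (t ω)
      map_add' := fun ω₁ ω₂ => by
        have h1 : β (t (ω₁ + ω₂)) = β (t ω₁ + t ω₂) := by rw [map_add, hβt, hβt, hβt]
        rw [hfac _ _ h1, map_add, smul_add]
      map_smul' := fun b ω => by
        have h1 : β (t (b • ω)) = β (b • t ω) := by rw [map_smul, hβt, hβt]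
        rw [RingHom.id_apply, hfac _ _ h1, map_smul, smul_comm] } with hσdef
  have hσβ : ∀ u, σ (β u) = cb • j u := fun u => hfac _ _ (hβt (β u))
  have hjswap : ∀ u w, j u * j w + j w * j u = 0 := by
    intro u w
    induction w using TensorProduct.induction_on with
    | zero => simp
    | tmul b' v' =>
      induction u using TensorProduct.induction_on with
      | zero => simp
      | tmul b v =>
        rw [hjdef, LinearMap.baseChange_tmul, LinearMap.baseChange_tmul,
          Algebra.TensorProduct.tmul_mul_tmul, Algebra.TensorProduct.tmul_mul_tmul,
          mul_comm b' b, ← TensorProduct.tmul_add, ExteriorAlgebra.ι_add_mul_swap,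
          TensorProduct.tmul_zero]
      | add u₁ u₂ h1 h2 => rw [map_add, add_mul, mul_add, add_add_add_comm, h1, h2, add_zero]
    | add w₁ w₂ h1 h2 => rw [map_add, mul_add, add_mul, add_add_add_comm, h1, h2, add_zero]
  have hjsq : ∀ u, j u * j u = 0 := by
    intro u
    induction u using TensorProduct.induction_on with
    | zero => simp
    | tmul b v =>
      rw [hjdef, LinearMap.baseChange_tmul, Algebra.TensorProduct.tmul_mul_tmul,
        ExteriorAlgebra.ι_sq_zero, TensorProduct.tmul_zero]
    | add u₁ u₂ h1 h2 =>
      rw [map_add, add_mul, mul_add, mul_add, h1, h2, zero_add, add_zero, hjswap]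
  have hσsq : ∀ ω, σ ω * σ ω = 0 := by
    intro ω
    show (cb • j (t ω)) * (cb • j (t ω)) = 0
    rw [smul_mul_assoc, mul_smul_comm, hjsq, smul_zero, smul_zero]
  set Ψ := ExteriorAlgebra.lift B ⟨σ, hσsq⟩ with hΨdef
  -- Step 4: the statement's maps
  letI instA : Algebra A (ExteriorAlgebra B (Ω[B⁄k])) :=
    RingHom.toAlgebra'
      ((algebraMap B (ExteriorAlgebra B (Ω[B⁄k]))).comp (algebraMap A B))
      (fun a x => Algebra.commutes (R := B) ((algebraMap A B) a) x)
  haveI instT : @IsScalarTower A B (ExteriorAlgebra B (Ω[B⁄k])) _ _ Algebra.toSMul :=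
    IsScalarTower.of_algebraMap_eq fun _ => rfl
  set gmy : ExteriorAlgebra A (Ω[A⁄k]) →ₐ[A] ExteriorAlgebra B (Ω[B⁄k]) :=
    ExteriorAlgebra.lift A
      ⟨((ExteriorAlgebra.ι B).restrictScalars A) ∘ₗ KaehlerDifferential.map k k A B,
       fun m => ExteriorAlgebra.ι_sq_zero _⟩ with hgmy
  set Φmy := LinearMap.liftBaseChange B gmy.toLinearMap with hΦmy
  -- Step 5: key identity on pure tensors of exterior powers
  have hpow : ∀ (n : ℕ) (m : ExteriorAlgebra A (Ω[A⁄k])), m ∈ (⋀[A]^n (Ω[A⁄k])) →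
      Ψ (Φmy ((1 : B) ⊗ₜ[A] m)) = (cb ^ n) • ((1 : B) ⊗ₜ[A] m) := by
    intro n m hm
    refine Submodule.pow_induction_on_left'
      (M := LinearMap.range (ExteriorAlgebra.ι A : Ω[A⁄k] →ₗ[A] ExteriorAlgebra A (Ω[A⁄k])))
      (C := fun n m _ => Ψ (Φmy ((1 : B) ⊗ₜ[A] m)) = (cb ^ n) • ((1 : B) ⊗ₜ[A] m))
      ?_ ?_ ?_ hm
    · intro r
      rw [hΦmy, LinearMap.liftBaseChange_tmul, one_smul, AlgHom.toLinearMap_apply,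
        AlgHom.commutes, pow_zero, one_smul]
      have h1 : algebraMap A (ExteriorAlgebra B (Ω[B⁄k])) r
          = algebraMap B (ExteriorAlgebra B (Ω[B⁄k])) (Ideal.Quotient.mk aI r) := rfl
      rw [h1, AlgHom.commutes, Algebra.TensorProduct.algebraMap_apply, Algebra.algebraMap_self_apply]
      rw [← Ideal.Quotient.algebraMap_eq, Algebra.algebraMap_eq_smul_one,
        TensorProduct.smul_tmul, ← Algebra.algebraMap_eq_smul_one]
    · intro x' y' i hx' hy' ihx ihy
      rw [TensorProduct.tmul_add, map_add, map_add, ihx, ihy, smul_add]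
    · intro mel hmel i x' hx' ih
      obtain ⟨v, rfl⟩ := hmel
      have hgm : Φmy ((1 : B) ⊗ₜ[A] (ExteriorAlgebra.ι A v * x'))
          = gmy (ExteriorAlgebra.ι A v) * gmy x' := by
        rw [hΦmy, LinearMap.liftBaseChange_tmul, one_smul, AlgHom.toLinearMap_apply, map_mul]
      rw [hgm, map_mul]
      have hψx : Ψ (gmy x') = cb ^ i • ((1 : B) ⊗ₜ[A] x') := by
        have hx0 : Φmy ((1 : B) ⊗ₜ[A] x') = gmy x' := by
          rw [hΦmy, LinearMap.liftBaseChange_tmul, one_smul, AlgHom.toLinearMap_apply]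
        rw [← hx0]; exact ih
      have hψv : Ψ (gmy (ExteriorAlgebra.ι A v))
          = cb • ((1 : B) ⊗ₜ[A] ExteriorAlgebra.ι A v) := by
        have hg1 : gmy (ExteriorAlgebra.ι A v)
            = ExteriorAlgebra.ι B (KaehlerDifferential.map k k A B v) := by
          rw [hgmy]; exact ExteriorAlgebra.lift_ι_apply (R := A) (A := ExteriorAlgebra B (Ω[B⁄k]))
            (((ExteriorAlgebra.ι B).restrictScalars A) ∘ₗ KaehlerDifferential.map k k A B)
            (fun m => ExteriorAlgebra.ι_sq_zero _) v
        rw [hg1, hΨdef, ExteriorAlgebra.lift_ι_apply]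
        have hb1 : β ((1 : B) ⊗ₜ[A] v) = KaehlerDifferential.map k k A B v := by
          rw [hβdef, KaehlerDifferential.mapBaseChange_tmul, one_smul]
        rw [← hb1, hσβ, hjdef, LinearMap.baseChange_tmul]
      rw [hψx, hψv, smul_mul_assoc, mul_smul_comm, smul_smul,
        Algebra.TensorProduct.tmul_mul_tmul, one_mul, ← pow_succ']
  -- Step 6: conclude
  intro hΦ
  refine ⟨cb ^ p, pow_mem hcnzd p, ?_⟩
  have hΦ0 : Φmy x = 0 := hΦ
  have hx' : x ∈ Submodule.span B
      ((⋀[A]^p (Ω[A⁄k])).map (TensorProduct.mk A B (ExteriorAlgebra A (Ω[A⁄k])) 1)) := by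
    rw [← Submodule.baseChange_eq_span]; exact hx
  have hmain : Ψ (Φmy x) = cb ^ p • x := by
    refine Submodule.span_induction ?_ ?_ ?_ ?_ hx'
    · rintro y ⟨m, hm, rfl⟩
      exact hpow p m hm
    · rw [map_zero, map_zero, smul_zero]
    · intro y z _ _ hy hz
      rw [map_add, map_add, hy, hz, smul_add]
    · intro b y _ hy
      rw [map_smul, ← AlgHom.toLinearMap_apply, map_smul, AlgHom.toLinearMap_apply, hy,
        smul_smul, smul_smul, mul_comm]
  rw [hΦ0, map_zero] at hmain
  exact hmain.symm
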